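/- Fix β > 0 and define g : [0, ∞) → [0, ∞) as follows: g(t) = 0 for t ∈ [0, 2]; for each integer n ≥ 2, with hₙ := n^β and aₙ := 1/2 − 1/n^{β+1}, set g(t) = 0 for t ∈ [n, n + aₙ], g(t) = (hₙ/(1/2 − aₙ)) t − hₙ(n + aₙ)/(1/2 − aₙ) for t ∈ [n + aₙ, n + 1/2], g(t) = (−hₙ/(1/2 − aₙ)) t + hₙ(n + 1 − aₙ)/(1/2 − aₙ) for t ∈ [n + 1/2, n + 1 − aₙ], and g(t) = 0 for t ∈ [n + 1 − aₙ, n + 1]. Then g is continuous and non-negative, and for every p ∈ (1, ∞): ∫₀^∞ (∫ₜ^{t+1} g(s) ds)^p dt < ∞, while ∫₀^∞ g(s)^p ds = +∞. -/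

import Mathlib

open MeasureTheory intervalIntegral
open scoped ENNReal NNReal

/-- The continuous piecewise-linear "spike" function: `g = 0` on `[0,2]`, and for each
integer `n ≥ 2`, with `hₙ = n^β` and `aₙ = 1/2 − 1/n^{β+1}`, `g` vanishes on
`[n, n+aₙ]` and `[n+1−aₙ, n+1]` and is linear on `[n+aₙ, n+1/2]` and `[n+1/2, n+1−aₙ]`,
rising to the maximal height `hₙ` at `n + 1/2`. -/
noncomputable def spike (β : ℝ) (t : ℝ) : ℝ :=
  if t ≤ 2 then 0
  else
    let n : ℕ := ⌊t⌋₊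
    let hn : ℝ := (n : ℝ) ^ β
    let an : ℝ := 1 / 2 - 1 / (n : ℝ) ^ (β + 1)
    if t ≤ (n : ℝ) + an then 0
    else if t ≤ (n : ℝ) + 1 / 2 then
      hn / (1 / 2 - an) * t - hn * ((n : ℝ) + an) / (1 / 2 - an)
    else if t ≤ (n : ℝ) + 1 - an then
      -hn / (1 / 2 - an) * t + hn * ((n : ℝ) + 1 - an) / (1 / 2 - an)
    else 0

noncomputable def aa (β : ℝ) (n : ℕ) : ℝ := 1 / 2 - 1 / (n : ℝ) ^ (β + 1)

noncomputable def tent (β : ℝ) (n : ℕ) (t : ℝ) : ℝ :=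
  (n : ℝ) ^ β / (1 / 2 - aa β n) *
    max 0 (min (t - ((n : ℝ) + aa β n)) (((n : ℝ) + 1 - aa β n) - t))

lemma half_sub_aa (β : ℝ) (n : ℕ) : 1 / 2 - aa β n = 1 / (n : ℝ) ^ (β + 1) := by
  simp [aa]

lemma two_lt_rpow {β : ℝ} (hβ : 0 < β) {n : ℕ} (hn : 2 ≤ n) :
    2 < (n : ℝ) ^ (β + 1) := by
  have h2 : (2 : ℝ) ≤ (n : ℝ) := by exact_mod_cast hn
  calc (2:ℝ) = 2 ^ (1:ℝ) := by norm_num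
    _ < 2 ^ (β + 1) := by
        apply Real.rpow_lt_rpow_left_iff (by norm_num) |>.mpr; linarith
    _ ≤ (n : ℝ) ^ (β + 1) := Real.rpow_le_rpow (by norm_num) h2 (by linarith)

lemma aa_pos {β : ℝ} (hβ : 0 < β) {n : ℕ} (hn : 2 ≤ n) : 0 < aa β n := by
  have h := two_lt_rpow hβ hn
  have : 1 / (n : ℝ) ^ (β + 1) < 1 / 2 := by
    apply one_div_lt_one_div_of_lt <;> linarith
  simp only [aa]; linarith

lemma aa_lt_half {β : ℝ} {n : ℕ} (hn : 2 ≤ n) : aa β n < 1 / 2 := by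
  have hnp : (0:ℝ) < (n:ℝ) := by positivity
  have h : (0:ℝ) < (n : ℝ) ^ (β + 1) := Real.rpow_pos_of_pos hnp _
  have : 0 < 1 / (n : ℝ) ^ (β + 1) := by positivity
  simp only [aa]; linarith

lemma spike_eq_tent {β : ℝ} (hβ : 0 < β) {n : ℕ} (hn : 2 ≤ n) {t : ℝ}
    (ht : t ∈ Set.Icc (n : ℝ) ((n : ℝ) + 1)) : spike β t = tent β n t := by
  obtain ⟨ht1, ht2⟩ := ht
  have hslope : (0:ℝ) < 1 / 2 - aa β n := by
    rw [half_sub_aa]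
    have : (0:ℝ) < (n:ℝ) := by positivity
    positivity
  have haa := aa_pos hβ hn
  have hah := aa_lt_half (β := β) (n := n) hn
  have hn2 : (2:ℝ) ≤ (n:ℝ) := by exact_mod_cast hn
  rcases eq_or_lt_of_le ht2 with h | h
  · -- t = n + 1
    have haa' := aa_pos hβ (n := n+1) (by omega)
    have hfl : ⌊t⌋₊ = n + 1 := by
      have : t = ((n + 1 : ℕ) : ℝ) := by push_cast; linarith
      rw [this, Nat.floor_natCast]
    have hs : spike β t = 0 := by
      simp only [spike, hfl]
      simp only [aa] at haa'
      push_cast at haa'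
      split_ifs with h1 h2
      all_goals first
        | rfl
        | (exfalso; apply h2; push_cast; linarith)
    rw [hs, tent]
    have : min (t - ((n : ℝ) + aa β n)) (((n : ℝ) + 1 - aa β n) - t) ≤ 0 := by
      apply min_le_of_right_le; linarith
    rw [max_eq_left this, mul_zero]
  · have hfl : ⌊t⌋₊ = n := by
      have ht0 : (0:ℝ) ≤ t := by linarith
      rw [Nat.floor_eq_iff ht0]
      exact ⟨ht1, by push_cast; linarith⟩
    by_cases h2 : t ≤ 2
    · -- then n = 2, t = 2
      have hnn : n = 2 := by
        have : (n:ℝ) ≤ 2 := le_trans ht1 h2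
        have : n ≤ 2 := by exact_mod_cast this
        omega
      subst hnn
      have ht2' : t = 2 := le_antisymm h2 (by exact_mod_cast ht1)
      have hs : spike β t = 0 := by simp [spike, h2]
      rw [hs, tent]
      have : min (t - ((2 : ℕ) + aa β 2)) (((2:ℕ) + 1 - aa β 2) - t) ≤ 0 := by
        apply min_le_of_left_le; push_cast; linarith
      rw [max_eq_left this, mul_zero]
    · simp only [spike, hfl, if_neg h2]
      have haan : aa β n = 1 / 2 - 1 / (n : ℝ) ^ (β + 1) := rfl
      rw [tent, ← haan]
      split_ifs with c1 c2 c3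
      · have : min (t - ((n : ℝ) + aa β n)) (((n : ℝ) + 1 - aa β n) - t) ≤ 0 := by
          apply min_le_of_left_le; linarith
        rw [max_eq_left this, mul_zero]
      · have hmin : min (t - ((n : ℝ) + aa β n)) (((n : ℝ) + 1 - aa β n) - t)
            = t - ((n : ℝ) + aa β n) := by
          apply min_eq_left; linarith
        have hmax : max 0 (t - ((n : ℝ) + aa β n)) = t - ((n : ℝ) + aa β n) := by
          apply max_eq_right; push_neg at c1; linarith
        rw [hmin, hmax]
        field_simp
      · have hmin : min (t - ((n : ℝ) + aa β n)) (((n : ℝ) + 1 - aa β n) - t)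
            = ((n : ℝ) + 1 - aa β n) - t := by
          apply min_eq_right; linarith
        have hmax : max 0 (((n : ℝ) + 1 - aa β n) - t) = ((n : ℝ) + 1 - aa β n) - t := by
          apply max_eq_right; linarith
        rw [hmin, hmax]
        field_simp
        ring
      · have : min (t - ((n : ℝ) + aa β n)) (((n : ℝ) + 1 - aa β n) - t) ≤ 0 := by
          apply min_le_of_right_le; push_neg at c3; linarith
        rw [max_eq_left this, mul_zero]

lemma tent_nonneg (β : ℝ) (n : ℕ) (t : ℝ) : 0 ≤ tent β n t := by
  apply mul_nonneg
  · apply div_nonneg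
    · exact Real.rpow_nonneg (by positivity) _
    · rw [half_sub_aa]
      have : (0:ℝ) ≤ (n:ℝ) := by positivity
      positivity
  · exact le_max_left _ _

lemma tent_le {β : ℝ} (n : ℕ) (t : ℝ) : tent β n t ≤ (n:ℝ) ^ β := by
  set a := aa β n with ha
  set A := t - ((n : ℝ) + a) with hA
  set B := ((n : ℝ) + 1 - a) - t with hB
  have hrn : (0:ℝ) ≤ (n:ℝ) ^ β := Real.rpow_nonneg (by positivity) _
  rcases eq_or_ne ((1:ℝ)/2 - a) 0 with h | h
  · rw [tent, ← ha, h, div_zero, zero_mul]; exact hrn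
  · have hpos : (0:ℝ) < 1/2 - a := by
      rw [ha, half_sub_aa] at h ⊢
      rcases lt_or_eq_of_le (by positivity : (0:ℝ) ≤ 1 / (n:ℝ)^(β+1)) with h' | h'
      · exact h'
      · exact absurd h'.symm h
    rw [tent, ← ha, ← hA, ← hB]
    have h1 := min_le_left A B
    have h2 := min_le_right A B
    have hAB : A + B = 1 - 2*a := by rw [hA, hB]; ring
    have hm : max 0 (min A B) ≤ 1/2 - a := by
      apply max_le (by linarith); linarith
    calc (n:ℝ)^β / (1/2 - a) * max 0 (min A B)
        ≤ (n:ℝ)^β / (1/2 - a) * (1/2 - a) := by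
          apply mul_le_mul_of_nonneg_left hm (by positivity)
      _ = (n:ℝ)^β := div_mul_cancel₀ _ h

lemma spike_nonneg (β : ℝ) (hβ : 0 < β) (t : ℝ) : 0 ≤ spike β t := by
  by_cases h : t ≤ 2
  · simp [spike, h]
  · push_neg at h
    have h0 : (0:ℝ) ≤ t := by linarith
    have hfn : 2 ≤ ⌊t⌋₊ := by
      rw [Nat.le_floor_iff h0]; push_cast; linarith
    rw [spike_eq_tent hβ hfn ⟨Nat.floor_le h0, (Nat.lt_floor_add_one t).le⟩]
    exact tent_nonneg β _ t

lemma spike_of_le_two {β : ℝ} {t : ℝ} (h : t ≤ 2) : spike β t = 0 := by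
  simp [spike, h]

lemma spike_zero_right {β : ℝ} (hβ : 0 < β) {n : ℕ} (hn : 2 ≤ n) {s : ℝ}
    (h1 : (n:ℝ) ≤ s) (h2 : s ≤ (n:ℝ) + aa β n) : spike β s = 0 := by
  have hah := aa_lt_half (β := β) (n := n) hn
  rw [spike_eq_tent hβ hn ⟨h1, by linarith⟩, tent]
  have : min (s - ((n : ℝ) + aa β n)) (((n : ℝ) + 1 - aa β n) - s) ≤ 0 :=
    min_le_of_left_le (by linarith)
  rw [max_eq_left this, mul_zero]

lemma spike_zero_left {β : ℝ} (hβ : 0 < β) {n : ℕ} (hn : 2 ≤ n) {s : ℝ}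
    (h1 : (n:ℝ) + 1 - aa β n ≤ s) (h2 : s ≤ (n:ℝ) + 1) : spike β s = 0 := by
  have hah := aa_lt_half (β := β) (n := n) hn
  rw [spike_eq_tent hβ hn ⟨by linarith, h2⟩, tent]
  have : min (s - ((n : ℝ) + aa β n)) (((n : ℝ) + 1 - aa β n) - s) ≤ 0 :=
    min_le_of_right_le (by linarith)
  rw [max_eq_left this, mul_zero]

lemma tent_continuous (β : ℝ) (n : ℕ) : Continuous (tent β n) := by
  unfold tent
  fun_prop

lemma spike_continuous (β : ℝ) (hβ : 0 < β) : Continuous (spike β) := by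
  rw [continuous_iff_continuousAt]
  intro t
  rcases lt_or_ge t 2 with h | h
  · apply ContinuousAt.congr continuousAt_const
    filter_upwards [Iio_mem_nhds h] with s hs
    exact (spike_of_le_two hs.le).symm
  · set n := ⌊t⌋₊ with hn
    have h0 : (0:ℝ) ≤ t := by linarith
    have hn2 : 2 ≤ n := by rw [hn, Nat.le_floor_iff h0]; push_cast; linarith
    have hfl : (n:ℝ) ≤ t := Nat.floor_le h0
    have hfl' : t < (n:ℝ) + 1 := Nat.lt_floor_add_one t
    rcases eq_or_lt_of_le hfl with heq | hlt
    · apply ContinuousAt.congr continuousAt_const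
      rcases eq_or_lt_of_le hn2 with h2 | h3
      · have ht2 : t = 2 := by rw [← heq, ← h2]; norm_num
        have haa := aa_pos hβ hn2
        filter_upwards [Iio_mem_nhds (show t < (n:ℝ) + aa β n by linarith)] with s hs
        rcases le_or_gt s 2 with hs2 | hs2
        · exact (spike_of_le_two hs2).symm
        · refine (spike_zero_right hβ hn2 ?_ (le_of_lt hs)).symm
          rw [← ht2] at hs2
          linarith
      · have hm2 : 2 ≤ n - 1 := by omega
        have haa := aa_pos hβ hn2
        have haa' := aa_pos hβ (n := n - 1) hm2
        have hcast : ((n - 1 : ℕ) : ℝ) = (n:ℝ) - 1 := by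
          push_cast [Nat.cast_sub (by omega : 1 ≤ n)]; ring
        have hmem : t ∈ Set.Ioo ((n:ℝ) - aa β (n-1)) ((n:ℝ) + aa β n) := by
          constructor
          · linarith
          · linarith
        filter_upwards [Ioo_mem_nhds hmem.1 hmem.2] with s hs
        rcases le_or_gt (n:ℝ) s with hsn | hsn
        · exact (spike_zero_right hβ hn2 hsn hs.2.le).symm
        · refine (spike_zero_left hβ hm2 ?_ ?_).symm
          · rw [hcast]
            have := hs.1
            linarith
          · rw [hcast]
            linarith
    · apply ContinuousAt.congr ((tent_continuous β n).continuousAt)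
      filter_upwards [Ioo_mem_nhds hlt hfl'] with s hs
      exact (spike_eq_tent hβ hn2 ⟨hs.1.le, hs.2.le⟩).symm

lemma spike_intervalIntegrable (β : ℝ) (hβ : 0 < β) (a b : ℝ) :
    IntervalIntegrable (spike β) volume a b :=
  (spike_continuous β hβ).intervalIntegrable a b

lemma integral_spike_le {β : ℝ} (hβ : 0 < β) {n : ℕ} (hn : 2 ≤ n) :
    (∫ s in (n:ℝ)..((n:ℝ)+1), spike β s) ≤ 2 / n := by
  have haa := aa_pos hβ hn
  have hah := aa_lt_half (β := β) (n := n) hn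
  set a := aa β n with ha
  have hnr : (0:ℝ) < (n:ℝ) := by positivity
  have key1 : (∫ s in (n:ℝ)..((n:ℝ)+a), spike β s) = 0 := by
    rw [intervalIntegral.integral_congr (g := fun _ => 0), intervalIntegral.integral_zero]
    intro s hs
    rw [Set.uIcc_of_le (by linarith)] at hs
    exact spike_zero_right hβ hn hs.1 hs.2
  have key3 : (∫ s in ((n:ℝ)+1-a)..((n:ℝ)+1), spike β s) = 0 := by
    rw [intervalIntegral.integral_congr (g := fun _ => 0), intervalIntegral.integral_zero]
    intro s hs
    rw [Set.uIcc_of_le (by linarith)] at hs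
    exact spike_zero_left hβ hn hs.1 hs.2
  have key2 : (∫ s in ((n:ℝ)+a)..((n:ℝ)+1-a), spike β s) ≤ (1 - 2*a) * (n:ℝ)^β := by
    have := intervalIntegral.integral_mono_on (μ := volume) (a := (n:ℝ)+a)
      (b := (n:ℝ)+1-a) (f := spike β) (g := fun _ => (n:ℝ)^β) (by linarith)
      (spike_intervalIntegrable β hβ _ _) (intervalIntegrable_const)
      (fun s hs => by
        rw [spike_eq_tent hβ hn ⟨by linarith [hs.1], by linarith [hs.2]⟩]
        exact tent_le n s)
    rw [intervalIntegral.integral_const, smul_eq_mul] at this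
    calc (∫ s in ((n:ℝ)+a)..((n:ℝ)+1-a), spike β s)
        ≤ ((n:ℝ)+1-a - ((n:ℝ)+a)) * (n:ℝ)^β := this
      _ = (1 - 2*a) * (n:ℝ)^β := by ring
  have split : (∫ s in (n:ℝ)..((n:ℝ)+1), spike β s)
      = (∫ s in (n:ℝ)..((n:ℝ)+a), spike β s)
        + (∫ s in ((n:ℝ)+a)..((n:ℝ)+1-a), spike β s)
        + (∫ s in ((n:ℝ)+1-a)..((n:ℝ)+1), spike β s) := by
    rw [intervalIntegral.integral_add_adjacent_intervals
        (spike_intervalIntegrable β hβ _ _) (spike_intervalIntegrable β hβ _ _),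
      intervalIntegral.integral_add_adjacent_intervals
        (spike_intervalIntegrable β hβ _ _) (spike_intervalIntegrable β hβ _ _)]
  rw [split, key1, key3, zero_add, add_zero]
  have harith : (1 - 2*a) * (n:ℝ)^β = 2 / n := by
    have h1 : 1 - 2*a = 2 / (n:ℝ)^(β+1) := by
      rw [ha]; simp [aa]; ring
    rw [h1]
    rw [div_mul_eq_mul_div, mul_comm, ← div_mul_eq_mul_div]
    rw [Real.rpow_add hnr, Real.rpow_one]
    field_simp
  linarith [key2, harith]

lemma F_nonneg (β : ℝ) (hβ : 0 < β) (t : ℝ) : 0 ≤ ∫ s in t..(t+1), spike β s :=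
  intervalIntegral.integral_nonneg (by linarith) (fun u _ => spike_nonneg β hβ u)

lemma F_le_of_two_le {β : ℝ} (hβ : 0 < β) {t : ℝ} (ht : 2 ≤ t) :
    (∫ s in t..(t+1), spike β s) ≤ 8 / t := by
  set n := ⌊t⌋₊ with hn
  have h0 : (0:ℝ) ≤ t := by linarith
  have hn2 : 2 ≤ n := by rw [hn, Nat.le_floor_iff h0]; push_cast; linarith
  have hnr : (2:ℝ) ≤ (n:ℝ) := by exact_mod_cast hn2
  have hfl : (n:ℝ) ≤ t := Nat.floor_le h0
  have hfl' : t < (n:ℝ) + 1 := Nat.lt_floor_add_one t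
  have h1 : (∫ s in t..(t+1), spike β s) ≤ ∫ s in (n:ℝ)..((n:ℝ)+2), spike β s := by
    apply intervalIntegral.integral_mono_interval hfl (by linarith) (by linarith)
    · filter_upwards with s using spike_nonneg β hβ s
    · exact spike_intervalIntegrable β hβ _ _
  have h2 : (∫ s in (n:ℝ)..((n:ℝ)+2), spike β s)
      = (∫ s in (n:ℝ)..((n:ℝ)+1), spike β s) + ∫ s in ((n:ℝ)+1)..((n:ℝ)+2), spike β s := by
    rw [intervalIntegral.integral_add_adjacent_intervals
      (spike_intervalIntegrable β hβ _ _) (spike_intervalIntegrable β hβ _ _)]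
  have h3 := integral_spike_le hβ hn2
  have h4 : (∫ s in ((n:ℝ)+1)..((n:ℝ)+2), spike β s) ≤ 2 / ((n:ℝ)+1) := by
    have := integral_spike_le hβ (n := n+1) (by omega)
    push_cast at this
    convert this using 2 <;> ring
  have h5 : 2 / ((n:ℝ)+1) ≤ 2 / (n:ℝ) := by
    apply div_le_div_of_nonneg_left (by norm_num) (by linarith) (by linarith)
  have h6 : 4 / (n:ℝ) ≤ 8 / t := by
    rw [div_le_div_iff₀ (by linarith) (by linarith)]
    nlinarith
  have h7 : 4/(n:ℝ) = 2/(n:ℝ) + 2/(n:ℝ) := by ring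
  calc (∫ s in t..(t+1), spike β s) ≤ 2/(n:ℝ) + 2/((n:ℝ)+1) := by linarith
    _ ≤ 4 / (n:ℝ) := by linarith
    _ ≤ 8 / t := h6

lemma F_le_two {β : ℝ} (hβ : 0 < β) {t : ℝ} (ht0 : 0 ≤ t) (ht : t ≤ 2) :
    (∫ s in t..(t+1), spike β s) ≤ 2 := by
  have h1 : (∫ s in t..(t+1), spike β s) ≤ ∫ s in (0:ℝ)..(4:ℝ), spike β s := by
    apply intervalIntegral.integral_mono_interval ht0 (by linarith) (by linarith)
    · filter_upwards with s using spike_nonneg β hβ s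
    · exact spike_intervalIntegrable β hβ _ _
  have h2 : (∫ s in (0:ℝ)..(4:ℝ), spike β s)
      = (∫ s in (0:ℝ)..(2:ℝ), spike β s) + ((∫ s in (2:ℝ)..(3:ℝ), spike β s)
        + ∫ s in (3:ℝ)..(4:ℝ), spike β s) := by
    rw [intervalIntegral.integral_add_adjacent_intervals
      (spike_intervalIntegrable β hβ _ _) (spike_intervalIntegrable β hβ _ _),
      intervalIntegral.integral_add_adjacent_intervals
      (spike_intervalIntegrable β hβ _ _) (spike_intervalIntegrable β hβ _ _)]
  have h3 : (∫ s in (0:ℝ)..(2:ℝ), spike β s) = 0 := by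
    rw [intervalIntegral.integral_congr (g := fun _ => 0), intervalIntegral.integral_zero]
    intro s hs
    rw [Set.uIcc_of_le (by norm_num)] at hs
    exact spike_of_le_two hs.2
  have h4 : (∫ s in (2:ℝ)..(3:ℝ), spike β s) ≤ 1 := by
    have := integral_spike_le hβ (n := 2) le_rfl
    norm_num at this
    convert this using 2 <;> norm_num
  have h5 : (∫ s in (3:ℝ)..(4:ℝ), spike β s) ≤ 2/3 := by
    have := integral_spike_le hβ (n := 3) (by omega)
    norm_num at this
    convert this using 2 <;> norm_num
  linarith

lemma avg_lintegral_lt_top {β : ℝ} (hβ : 0 < β) {p : ℝ} (hp : 1 < p) :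
    (∫⁻ t in Set.Ici (0 : ℝ),
      ENNReal.ofReal ((∫ s in t..(t + 1), spike β s) ^ p)) < ⊤ := by
  have hp0 : (0:ℝ) ≤ p := by linarith
  rw [← Set.Ico_union_Ici_eq_Ici (by norm_num : (0:ℝ) ≤ 2),
    lintegral_union measurableSet_Ici
      (Set.disjoint_left.mpr fun x hx hx2 => absurd hx2 (not_le.mpr hx.2))]
  apply ENNReal.add_lt_top.mpr
  constructor
  · -- [0, 2)
    calc (∫⁻ t in Set.Ico (0:ℝ) 2,
          ENNReal.ofReal ((∫ s in t..(t + 1), spike β s) ^ p))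
        ≤ ∫⁻ _ in Set.Ico (0:ℝ) 2, ENNReal.ofReal (2 ^ p) := by
          apply setLIntegral_mono measurable_const
          intro t ht
          apply ENNReal.ofReal_le_ofReal
          exact Real.rpow_le_rpow (F_nonneg β hβ t) (F_le_two hβ ht.1 ht.2.le) hp0
      _ = ENNReal.ofReal (2 ^ p) * volume (Set.Ico (0:ℝ) 2) := setLIntegral_const _ _
      _ < ⊤ := by
          rw [Real.volume_Ico]
          exact ENNReal.mul_lt_top ENNReal.ofReal_lt_top ENNReal.ofReal_lt_top
  · -- [2, ∞)
    have hbound : IntegrableOn (fun t : ℝ => (8 / t) ^ p) (Set.Ici (2:ℝ)) volume := by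
      rw [integrableOn_Ici_iff_integrableOn_Ioi]
      have : IntegrableOn (fun t : ℝ => t ^ (-p)) (Set.Ioi (2:ℝ)) volume :=
        integrableOn_Ioi_rpow_of_lt (by linarith) (by norm_num)
      have h8 : IntegrableOn (fun t : ℝ => 8 ^ p * t ^ (-p)) (Set.Ioi (2:ℝ)) volume :=
        this.const_mul _
      apply h8.congr_fun _ measurableSet_Ioi
      intro t ht
      have ht0 : (0:ℝ) < t := by have := ht; simp only [Set.mem_Ioi] at this; linarith
      simp only []
      rw [Real.div_rpow (by norm_num : (0:ℝ) ≤ 8) ht0.le, Real.rpow_neg ht0.le,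
        div_eq_mul_inv]
    calc (∫⁻ t in Set.Ici (2:ℝ),
          ENNReal.ofReal ((∫ s in t..(t + 1), spike β s) ^ p))
        ≤ ∫⁻ t in Set.Ici (2:ℝ), ENNReal.ofReal ((8 / t) ^ p) := by
          apply setLIntegral_mono
          · exact ((measurable_const.div measurable_id).pow measurable_const).ennreal_ofReal
          · intro t ht
            apply ENNReal.ofReal_le_ofReal
            exact Real.rpow_le_rpow (F_nonneg β hβ t) (F_le_of_two_le hβ ht) hp0
      _ < ⊤ := hbound.setLIntegral_lt_top

lemma spike_ge_on_J {β : ℝ} (hβ : 0 < β) {n : ℕ} (hn : 2 ≤ n) {s : ℝ}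
    (hs : s ∈ Set.Icc ((n:ℝ) + 1/2 - (1/2 - aa β n)/2) ((n:ℝ) + 1/2)) :
    (n:ℝ)^β / 2 ≤ spike β s := by
  have haa := aa_pos hβ hn
  have hah := aa_lt_half (β := β) (n := n) hn
  set a := aa β n with ha
  set c := ((1:ℝ)/2 - a)/2 with hc
  have hcpos : 0 < c := by rw [hc]; linarith
  obtain ⟨hs1, hs2⟩ := hs
  rw [spike_eq_tent hβ hn ⟨by linarith, by linarith⟩, tent, ← ha]
  have hA : c ≤ s - ((n:ℝ) + a) := by rw [hc] at hs1 ⊢; linarith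
  have hB : c ≤ ((n:ℝ) + 1 - a) - s := by rw [hc] at hs1 ⊢; linarith
  have hmin : c ≤ max 0 (min (s - ((n:ℝ) + a)) (((n:ℝ) + 1 - a) - s)) :=
    le_max_of_le_right (le_min hA hB)
  have hsl : (0:ℝ) ≤ (n:ℝ)^β / (1/2 - a) := by
    apply div_nonneg (Real.rpow_nonneg (by positivity) _) (by linarith)
  have hne : (1:ℝ)/2 - a ≠ 0 := by linarith
  calc (n:ℝ)^β / 2 = (n:ℝ)^β / (1/2 - a) * c := by
        rw [hc, div_mul_div_comm, mul_comm ((n:ℝ)^β), mul_div_mul_left _ _ hne]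
    _ ≤ _ := mul_le_mul_of_nonneg_left hmin hsl

lemma tsum_harmonic_top {C : ℝ} (hC : 0 < C) :
    (∑' k : ℕ, ENNReal.ofReal (C / ((k:ℝ) + 2))) = ⊤ := by
  by_contra hne
  have hsum : Summable (fun k : ℕ => Real.toNNReal (C / ((k:ℝ) + 2))) :=
    ENNReal.tsum_coe_ne_top_iff_summable.mp hne
  have hsum2 : Summable (fun k : ℕ => C / ((k:ℝ) + 2)) := by
    have := NNReal.summable_coe.mpr hsum
    refine this.congr fun k => ?_
    exact Real.coe_toNNReal _ (by positivity)
  have hsum3 : Summable (fun k : ℕ => 1 / ((k:ℝ) + 2)) := by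
    have := hsum2.mul_left C⁻¹
    refine this.congr fun k => ?_
    field_simp
  apply Real.not_summable_one_div_natCast
  rw [← summable_nat_add_iff 2]
  refine hsum3.congr fun k => ?_
  push_cast
  ring

lemma spike_lintegral_top {β : ℝ} (hβ : 0 < β) {p : ℝ} (hp : 1 < p) :
    (∫⁻ s in Set.Ici (0 : ℝ), ENNReal.ofReal (spike β s ^ p)) = ⊤ := by
  set J : ℕ → Set ℝ := fun k =>
    Set.Icc (((k+2:ℕ):ℝ) + 1/2 - (1/2 - aa β (k+2))/2) (((k+2:ℕ):ℝ) + 1/2) with hJ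
  have haa : ∀ k : ℕ, 0 < aa β (k+2) := fun k => aa_pos hβ (by omega)
  have hah : ∀ k : ℕ, aa β (k+2) < 1/2 := fun k => aa_lt_half (by omega)
  have hJsub : ∀ k : ℕ, J k ⊆ Set.Icc (((k+2:ℕ):ℝ) + 1/4) (((k+2:ℕ):ℝ) + 1/2) := by
    intro k x hx
    obtain ⟨h1, h2⟩ := hx
    exact ⟨by have := haa k; have := hah k; linarith, h2⟩
  have hdisj : Pairwise (Function.onFun Disjoint J) := by
    intro i j hij
    apply Set.disjoint_left.mpr
    intro x hxi hxj
    have hi := hJsub i hxi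
    have hj := hJsub j hxj
    apply hij
    push_cast at hi hj
    have : (i:ℝ) = (j:ℝ) := by
      obtain ⟨hi1, hi2⟩ := hi; obtain ⟨hj1, hj2⟩ := hj
      have h1 : (i:ℝ) ≤ j := by
        by_contra hc
        push_neg at hc
        have : (j:ℝ) + 1 ≤ i := by exact_mod_cast Nat.cast_lt.mp hc
        linarith
      have h2 : (j:ℝ) ≤ i := by
        by_contra hc
        push_neg at hc
        have : (i:ℝ) + 1 ≤ j := by exact_mod_cast Nat.cast_lt.mp hc
        linarith
      linarith
    exact_mod_cast this
  have hmeasJ : ∀ k, MeasurableSet (J k) := fun k => measurableSet_Icc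
  have hUnion_sub : (⋃ k, J k) ⊆ Set.Ici (0:ℝ) := by
    intro x hx
    obtain ⟨k, hk⟩ := Set.mem_iUnion.mp hx
    have := (hJsub k hk).1
    have : (0:ℝ) ≤ ((k+2:ℕ):ℝ) + 1/4 := by positivity
    simp only [Set.mem_Ici]
    linarith [(hJsub k hk).1]
  have hmeas : Measurable fun s => ENNReal.ofReal (spike β s ^ p) :=
    (((spike_continuous β hβ).measurable).pow measurable_const).ennreal_ofReal
  have key : ∀ k : ℕ,
      ENNReal.ofReal ((((k+2:ℕ):ℝ))^β / 2 ^ p / 2 / ((k+2:ℕ):ℝ)^(β+1))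
        ≤ ∫⁻ s in J k, ENNReal.ofReal (spike β s ^ p) := by
    intro k
    set n : ℕ := k + 2 with hn
    have hn2 : 2 ≤ n := by omega
    have hnr : (1:ℝ) ≤ (n:ℝ) := by
      have : (2:ℝ) ≤ (n:ℝ) := by exact_mod_cast hn2
      linarith
    have hnp : (0:ℝ) < (n:ℝ) := by linarith
    -- lower bound the integrand by the constant ((n^β)/2)^p on J k
    have step1 : ENNReal.ofReal (((n:ℝ)^β / 2) ^ p) * volume (J k)
        ≤ ∫⁻ s in J k, ENNReal.ofReal (spike β s ^ p) := by
      rw [← setLIntegral_const (J k) _]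
      apply setLIntegral_mono hmeas
      intro s hs
      apply ENNReal.ofReal_le_ofReal
      apply Real.rpow_le_rpow (by positivity) _ (by linarith)
      exact spike_ge_on_J hβ hn2 hs
    have hvol : volume (J k) = ENNReal.ofReal ((1/2 - aa β n)/2) := by
      rw [hJ]
      rw [Real.volume_Icc]
      congr 1
      ring
    have hnb1 : (0:ℝ) < (n:ℝ)^(β+1) := Real.rpow_pos_of_pos hnp _
    have harr : (1/2 - aa β n)/2 = 1 / (2 * (n:ℝ)^(β+1)) := by
      rw [half_sub_aa]
      field_simp
    -- arithmetic lower bound for the constant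
    have hconst : ((n:ℝ))^β / 2 ^ p / 2 / ((n:ℝ))^(β+1)
        ≤ ((n:ℝ)^β / 2) ^ p * ((1/2 - aa β n)/2) := by
      rw [harr]
      have hrp : ((n:ℝ)^β / 2) ^ p = ((n:ℝ)^β)^p / 2^p :=
        Real.div_rpow (Real.rpow_nonneg hnp.le _) (by norm_num : (0:ℝ) ≤ 2) p
      have hexp : ((n:ℝ)^β)^p = (n:ℝ)^(β*p) := (Real.rpow_mul hnp.le β p).symm
      have hmono : (n:ℝ)^β ≤ (n:ℝ)^(β*p) := by
        apply Real.rpow_le_rpow_of_exponent_le hnr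
        nlinarith
      have h2p : (0:ℝ) < 2^p := Real.rpow_pos_of_pos (by norm_num) p
      rw [hrp, hexp]
      have e2 : (n:ℝ)^(β*p)/2^p * (1/(2*(n:ℝ)^(β+1)))
          = (n:ℝ)^(β*p) / 2^p / 2 / (n:ℝ)^(β+1) := by
        field_simp
      rw [e2]
      gcongr
    calc ENNReal.ofReal ((((n:ℕ):ℝ))^β / 2 ^ p / 2 / ((n:ℕ):ℝ)^(β+1))
        ≤ ENNReal.ofReal (((n:ℝ)^β / 2) ^ p * ((1/2 - aa β n)/2)) :=
          ENNReal.ofReal_le_ofReal hconst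
      _ = ENNReal.ofReal (((n:ℝ)^β / 2) ^ p) * ENNReal.ofReal ((1/2 - aa β n)/2) := by
          rw [ENNReal.ofReal_mul (by positivity)]
      _ = ENNReal.ofReal (((n:ℝ)^β / 2) ^ p) * volume (J k) := by rw [hvol]
      _ ≤ _ := step1
  -- the constants dominate a harmonic series
  set C : ℝ := ((2:ℝ)^p * 2)⁻¹ with hC
  have hCpos : 0 < C := by
    rw [hC]
    have : (0:ℝ) < 2^p := Real.rpow_pos_of_pos (by norm_num) p
    positivity
  have key2 : ∀ k : ℕ, ENNReal.ofReal (C / ((k:ℝ) + 2))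
      ≤ ENNReal.ofReal ((((k+2:ℕ):ℝ))^β / 2 ^ p / 2 / ((k+2:ℕ):ℝ)^(β+1)) := by
    intro k
    apply ENNReal.ofReal_le_ofReal
    set n : ℕ := k + 2 with hn
    have hnr : (1:ℝ) ≤ (n:ℝ) := by
      have : 2 ≤ n := by omega
      have : (2:ℝ) ≤ (n:ℝ) := by exact_mod_cast this
      linarith
    have hnp : (0:ℝ) < (n:ℝ) := by linarith
    have h2p : (0:ℝ) < (2:ℝ)^p := Real.rpow_pos_of_pos (by norm_num) p
    have hk2 : ((k:ℝ) + 2) = (n:ℝ) := by rw [hn]; push_cast; ring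
    rw [hk2]
    have hnb1 : (0:ℝ) < (n:ℝ)^(β+1) := Real.rpow_pos_of_pos hnp _
    have hb : (0:ℝ) < (n:ℝ)^β := Real.rpow_pos_of_pos hnp _
    have hdiv : (n:ℝ)^β / (n:ℝ)^(β+1) = ((n:ℝ))⁻¹ := by
      rw [← Real.rpow_sub hnp]
      norm_num
      exact Real.rpow_neg_one _
    have : (n:ℝ)^β / 2 ^ p / 2 / (n:ℝ)^(β+1)
        = C * ((n:ℝ)^β / (n:ℝ)^(β+1)) := by
      rw [hC]; field_simp
    rw [this, hdiv, hC]
    rw [div_eq_mul_inv]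
  -- put everything together
  apply eq_top_iff.mpr
  calc (⊤:ℝ≥0∞) = ∑' k : ℕ, ENNReal.ofReal (C / ((k:ℝ) + 2)) :=
        (tsum_harmonic_top hCpos).symm
    _ ≤ ∑' k : ℕ, ∫⁻ s in J k, ENNReal.ofReal (spike β s ^ p) :=
        ENNReal.tsum_le_tsum (fun k => le_trans (key2 k) (key k))
    _ = ∫⁻ s in ⋃ k, J k, ENNReal.ofReal (spike β s ^ p) :=
        (lintegral_iUnion hmeasJ hdisj _).symm
    _ ≤ ∫⁻ s in Set.Ici (0:ℝ), ENNReal.ofReal (spike β s ^ p) :=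
        lintegral_mono_set hUnion_sub

/-- For every `β > 0`, the spike function `g` is continuous and non-negative on `[0, ∞)`,
and for every `p ∈ (1, ∞)`: `∫₀^∞ (∫ₜ^{t+1} g(s) ds)^p dt < ∞` while
`∫₀^∞ g(s)^p ds = +∞`. -/
theorem spike_average_Lp_not_Lp (β : ℝ) (hβ : 0 < β) :
    ContinuousOn (spike β) (Set.Ici 0) ∧
    (∀ t ∈ Set.Ici (0 : ℝ), 0 ≤ spike β t) ∧
    (∀ p ∈ Set.Ioi (1 : ℝ),
      (∫⁻ t in Set.Ici (0 : ℝ),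
          ENNReal.ofReal ((∫ s in t..(t + 1), spike β s) ^ p)) < ⊤ ∧
      (∫⁻ s in Set.Ici (0 : ℝ), ENNReal.ofReal (spike β s ^ p)) = ⊤) := by
  refine ⟨(spike_continuous β hβ).continuousOn, fun t _ => spike_nonneg β hβ t,
    fun p hp => ⟨avg_lintegral_lt_top hβ (Set.mem_Ioi.mp hp),
      spike_lintegral_top hβ (Set.mem_Ioi.mp hp)⟩⟩
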